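/- arXiv:1108.1645 — 4 statements merged into one kernel-verified Lean document; each statement's English description precedes it below -/
import Mathlib

section
/- Among all one-tap linear relay filters H(z) = d z^{-Δ} with integer delay Δ and gain d ≥ 0, the instantaneous amplify-and-forward scheme (Δ = 0) maximizes the achievable rate. Precisely: for every integer Δ, every d ≥ 0, and every integrable function S : [-π, π] → ℝ with S(ω) ≥ 0 for all ω, satisfying the source power constraint (1/(2π)) ∫_{-π}^{π} S(ω) dω ≤ P_s and the relay power constraint d² · (a² · (1/(2π)) ∫_{-π}^{π} S(ω) dω + σ²) ≤ P_r, one has (1/(2π)) ∫_{-π}^{π} (1/2) · log(1 + (|1 + a·b·d·e^{-iωΔ}|² / ((b²d² + 1)σ²)) · S(ω)) dω ≤ R_AF, where R_AF = sup over d ∈ [0, d_max] of (1/2) · log(1 + ((1 + a·b·d)² / ((b²d² + 1)σ²)) · P_s) and d_max = sqrt(P_r / (a²P_s + σ²)). -/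
open Real MeasureTheory Set

private theorem af_key_poly (a b σ2 Pr t d : ℝ) (ha : 0 < a) (hb : 0 < b) (hσ2 : 0 < σ2)
    (ht : 0 < t) (htd : t ≤ d) (hdP : σ2 * d^2 ≤ Pr) :
    (1+a*b*d)^2 * (Pr - σ2*d^2) * (t^2 * (1+b^2*t^2)) ≤
    (1+a*b*t)^2 * (Pr - σ2*t^2) * (d^2 * (1+b^2*d^2)) := by
  have hd : 0 < d := lt_of_lt_of_le ht htd
  have hX : 0 ≤ Pr - σ2*d^2 := by linarith
  have hdt : 0 ≤ d - t := by linarith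
  have hPr : 0 < Pr := lt_of_lt_of_le (by positivity) hdP
  have hT1 : 0 ≤ (d-t)*(b^2*t^2*(d+t)*(Pr-σ2*d^2)) := by positivity
  have hT2 : 0 ≤ (d-t)*(2*(a*b)*b^2*d*t^3*(Pr-σ2*d^2)) := by positivity
  have hT3 : 0 ≤ (d-t)*(Pr*(d+t)+Pr*b^2*(d+t)*d^2+2*(a*b)*Pr*d*t
      +2*(a*b)*Pr*b^2*d*t*(d^2+d*t)+(a*b)^2*Pr*b^2*d^2*t^2*(d+t)
      +2*(a*b)*σ2*d^2*t^2+(a*b)^2*σ2*d^2*t^2*(d+t)) := by positivity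
  nlinarith [hT1, hT2, hT3]

set_option maxHeartbeats 2000000 in
/-- Among all one-tap linear relay filters `H(z) = d z^{-Δ}` with integer delay `Δ` and
gain `d ≥ 0`, the instantaneous amplify-and-forward scheme (`Δ = 0`) maximizes the
achievable rate in the flat-fading Gaussian relay channel. -/
theorem af_optimal_among_one_tap_relay_filters
    (a b σ2 Ps Pr : ℝ) (ha : 0 < a) (hb : 0 < b) (hσ2 : 0 < σ2)
    (hPs : 0 < Ps) (hPr : 0 < Pr)
    (Δ : ℤ) (d : ℝ) (hd : 0 ≤ d)
    (S : ℝ → ℝ) (hS : IntegrableOn S (Icc (-π) π))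
    (hSnn : ∀ ω, 0 ≤ S ω)
    (hsrc : (1 / (2 * π)) * (∫ ω in Icc (-π) π, S ω) ≤ Ps)
    (hrel : d ^ 2 * (a ^ 2 * ((1 / (2 * π)) * ∫ ω in Icc (-π) π, S ω) + σ2) ≤ Pr) :
    (1 / (2 * π)) * (∫ ω in Icc (-π) π,
        (1 / 2) * Real.log (1 +
          (‖1 + ((a * b * d : ℝ) : ℂ) * Complex.exp (-Complex.I * (ω : ℂ) * (Δ : ℂ))‖ ^ 2
            / ((b ^ 2 * d ^ 2 + 1) * σ2)) * S ω))
      ≤ ⨆ d' ∈ Icc (0 : ℝ) (Real.sqrt (Pr / (a ^ 2 * Ps + σ2))),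
          (1 / 2) * Real.log (1 + ((1 + a * b * d') ^ 2 / ((b ^ 2 * d' ^ 2 + 1) * σ2)) * Ps) := by
  have hπ : (0:ℝ) < π := Real.pi_pos
  set Q : ℝ := (1 / (2 * π)) * ∫ ω in Icc (-π) π, S ω with hQdef
  set t : ℝ := Real.sqrt (Pr / (a ^ 2 * Ps + σ2)) with htdef
  have hden : (0:ℝ) < a ^ 2 * Ps + σ2 := by positivity
  have ht2 : t ^ 2 = Pr / (a ^ 2 * Ps + σ2) := Real.sq_sqrt (by positivity)
  have ht : 0 < t := Real.sqrt_pos.2 (by positivity)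
  have ht2' : t ^ 2 * (a ^ 2 * Ps + σ2) = Pr := by rw [ht2]; field_simp
  have hPst : a ^ 2 * t ^ 2 * Ps = Pr - σ2 * t ^ 2 := by nlinarith [ht2']
  have hI0 : 0 ≤ ∫ ω in Icc (-π) π, S ω :=
    setIntegral_nonneg measurableSet_Icc (fun x _ => hSnn x)
  have hQ0 : 0 ≤ Q := mul_nonneg (by positivity) hI0
  have h1abd : (0:ℝ) < 1 + a * b * d := by positivity
  have hK : (0:ℝ) < (b ^ 2 * d ^ 2 + 1) * σ2 := by positivity
  set c : ℝ := (1 + a * b * d) ^ 2 / ((b ^ 2 * d ^ 2 + 1) * σ2) with hcdef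
  have hc : 0 < c := div_pos (pow_pos h1abd 2) hK
  -- the channel gain as a function of ω
  set G : ℝ → ℝ := fun ω =>
    ‖1 + ((a * b * d : ℝ) : ℂ) * Complex.exp (-Complex.I * (ω : ℂ) * (Δ : ℂ))‖ ^ 2
      / ((b ^ 2 * d ^ 2 + 1) * σ2) with hGdef
  have habs : ∀ ω : ℝ,
      ‖1 + ((a * b * d : ℝ) : ℂ) * Complex.exp (-Complex.I * (ω : ℂ) * (Δ : ℂ))‖ ^ 2
        ≤ (1 + a * b * d) ^ 2 := by
    intro ω
    have hre : ((-Complex.I) * (ω : ℂ) * (Δ : ℂ)).re = 0 := by simp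
    have h1 : ‖1 + ((a * b * d : ℝ) : ℂ) * Complex.exp (-Complex.I * (ω : ℂ) * (Δ : ℂ))‖
        ≤ 1 + a * b * d := by
      calc ‖1 + ((a * b * d : ℝ) : ℂ) * Complex.exp (-Complex.I * (ω : ℂ) * (Δ : ℂ))‖
          ≤ ‖(1:ℂ)‖ +
            ‖((a * b * d : ℝ) : ℂ) * Complex.exp (-Complex.I * (ω : ℂ) * (Δ : ℂ))‖ :=
            norm_add_le _ _
        _ = 1 + a * b * d := by
            rw [norm_one, norm_mul, Complex.norm_exp, hre, Real.exp_zero, mul_one,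
              Complex.norm_real, Real.norm_eq_abs, abs_of_nonneg (by positivity)]
    exact pow_le_pow_left₀ (norm_nonneg _) h1 2
  have hGle : ∀ ω : ℝ, G ω ≤ c := fun ω => (div_le_div_iff_of_pos_right hK).mpr (habs ω)
  have hG0 : ∀ ω : ℝ, 0 ≤ G ω := fun ω => by positivity
  -- measurability facts
  have hSm : AEMeasurable S (volume.restrict (Icc (-π) π)) := hS.aemeasurable
  have hGcont : Continuous G := by
    apply Continuous.div_const
    apply Continuous.pow
    apply continuous_norm.comp
    exact continuous_const.add (continuous_const.mul
      (Complex.continuous_exp.comp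
        ((continuous_const.mul Complex.continuous_ofReal).mul continuous_const)))
  -- integrability of the comparison integrand
  have hgi : IntegrableOn (fun ω => Real.log (1 + c * S ω)) (Icc (-π) π) := by
    apply Integrable.mono' (hS.const_mul c)
    · exact (Real.measurable_log.comp_aemeasurable
        ((hSm.const_mul c).const_add 1)).aestronglyMeasurable
    · filter_upwards with ω
      have h1 : (0:ℝ) < 1 + c * S ω := by nlinarith [hSnn ω, mul_nonneg hc.le (hSnn ω)]
      have h2 : Real.log (1 + c * S ω) ≤ c * S ω := by
        have := Real.log_le_sub_one_of_pos h1; linarith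
      have h3 : 0 ≤ Real.log (1 + c * S ω) :=
        Real.log_nonneg (by nlinarith [mul_nonneg hc.le (hSnn ω)])
      rw [Real.norm_eq_abs, abs_of_nonneg h3]; exact h2
  -- integrability of the original integrand
  have hf0i : IntegrableOn
      (fun ω => (1 / 2) * Real.log (1 + G ω * S ω)) (Icc (-π) π) := by
    apply Integrable.mono' ((hS.const_mul c).const_mul (1/2))
    · exact ((Real.measurable_log.comp_aemeasurable
        ((hGcont.aemeasurable.mul hSm).const_add 1)).const_mul _).aestronglyMeasurable
    · filter_upwards with ω
      have hGS : 0 ≤ G ω * S ω := mul_nonneg (hG0 ω) (hSnn ω)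
      have h1 : (0:ℝ) < 1 + G ω * S ω := by linarith
      have h2 : Real.log (1 + G ω * S ω) ≤ c * S ω := by
        have h2' := Real.log_le_sub_one_of_pos h1
        have h2'' : G ω * S ω ≤ c * S ω :=
          mul_le_mul_of_nonneg_right (hGle ω) (hSnn ω)
        linarith
      have h3 : 0 ≤ Real.log (1 + G ω * S ω) := Real.log_nonneg (by linarith)
      rw [Real.norm_eq_abs, abs_of_nonneg (by positivity)]
      have : |Real.log (1 + G ω * S ω)| = Real.log (1 + G ω * S ω) := abs_of_nonneg h3
      calc (1/2) * Real.log (1 + G ω * S ω) ≤ (1/2) * (c * S ω) := by linarith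
        _ = 1/2 * (c * S ω) := by ring
  -- Step 1 : pointwise monotonicity of the integral
  have hmono : (∫ ω in Icc (-π) π, (1 / 2) * Real.log (1 + G ω * S ω))
      ≤ ∫ ω in Icc (-π) π, (1 / 2) * Real.log (1 + c * S ω) := by
    apply setIntegral_mono_on hf0i (hgi.const_mul (1/2)) measurableSet_Icc
    intro ω _
    have hGS : 0 ≤ G ω * S ω := mul_nonneg (hG0 ω) (hSnn ω)
    have h2'' : G ω * S ω ≤ c * S ω := mul_le_mul_of_nonneg_right (hGle ω) (hSnn ω)
    have hlog : Real.log (1 + G ω * S ω) ≤ Real.log (1 + c * S ω) :=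
      (Real.log_le_log_iff (by linarith) (by linarith)).mpr (by linarith)
    linarith
  -- volume facts
  have hvol : volume (Icc (-π) π) = ENNReal.ofReal (2 * π) := by
    rw [Real.volume_Icc]; ring_nf
  have h0 : volume (Icc (-π) π) ≠ 0 := by
    rw [hvol]; simp [ENNReal.ofReal_eq_zero]; positivity
  have hfin : volume (Icc (-π) π) ≠ ⊤ := by rw [hvol]; exact ENNReal.ofReal_ne_top
  have htor : (volume (Icc (-π) π)).toReal = 2 * π := by
    rw [hvol, ENNReal.toReal_ofReal (by positivity)]
  -- Jensen's inequality
  have hconc : ConcaveOn ℝ (Ici 0) (fun x => Real.log (1 + c * x)) := by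
    refine ⟨convex_Ici 0, ?_⟩
    intro x hx y hy p q hp hq hpq
    have hx0 : (0:ℝ) ≤ x := hx
    have hy0 : (0:ℝ) ≤ y := hy
    have h1 : (0:ℝ) < 1 + c * x := by nlinarith [mul_nonneg hc.le hx0]
    have h2 : (0:ℝ) < 1 + c * y := by nlinarith [mul_nonneg hc.le hy0]
    have := (strictConcaveOn_log_Ioi.concaveOn).2 (mem_Ioi.mpr h1) (mem_Ioi.mpr h2) hp hq hpq
    have heq : p • (1 + c * x) + q • (1 + c * y) = 1 + c * (p • x + q • y) := by
      simp only [smul_eq_mul]; linear_combination hpq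
    rw [heq] at this
    simpa only [smul_eq_mul] using this
  have hcont : ContinuousOn (fun x : ℝ => Real.log (1 + c * x)) (Ici 0) := by
    apply Real.continuousOn_log.comp
      ((continuous_const.add (continuous_const.mul continuous_id)).continuousOn)
    intro x hx
    have hx0 : (0:ℝ) ≤ x := hx
    simp only [mem_compl_iff, mem_singleton_iff, id_eq]
    intro hcontra
    simp only [Pi.add_apply, Pi.mul_apply, id_eq] at hcontra
    nlinarith [mul_nonneg hc.le hx0]
  have hfs : ∀ᵐ x ∂(volume.restrict (Icc (-π) π)), S x ∈ Ici (0:ℝ) :=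
    Filter.Eventually.of_forall (fun x => hSnn x)
  have hjen := hconc.le_map_set_average hcont isClosed_Ici h0 hfin hfs hS hgi
  have hjen' : (1 / (2 * π)) * (∫ ω in Icc (-π) π, Real.log (1 + c * S ω))
      ≤ Real.log (1 + c * Q) := by
    rw [setAverage_eq, setAverage_eq, measureReal_def, htor, smul_eq_mul, smul_eq_mul] at hjen
    rw [hQdef, one_div]
    exact hjen
  -- choose the optimal instantaneous gain
  set d' : ℝ := min d t with hd'def
  have hd'mem : d' ∈ Icc (0:ℝ) t := ⟨le_min hd ht.le, min_le_right _ _⟩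
  set F : ℝ → ℝ := fun x =>
    (1 / 2) * Real.log (1 + ((1 + a * b * x) ^ 2 / ((b ^ 2 * x ^ 2 + 1) * σ2)) * Ps) with hFdef
  have hscal : (1 / 2) * Real.log (1 + c * Q) ≤ F d' := by
    have hcQPs : c * Q ≤ ((1 + a * b * d') ^ 2 / ((b ^ 2 * d' ^ 2 + 1) * σ2)) * Ps := by
      rcases le_total d t with hcase | hcase
      · -- d' = d
        have : d' = d := min_eq_left hcase
        rw [this]
        calc c * Q ≤ c * Ps := mul_le_mul_of_nonneg_left hsrc hc.le
          _ = ((1 + a * b * d) ^ 2 / ((b ^ 2 * d ^ 2 + 1) * σ2)) * Ps := by rw [hcdef]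
      · -- d' = t, t ≤ d
        have hd'eq : d' = t := min_eq_right hcase
        have hdpos : 0 < d := lt_of_lt_of_le ht hcase
        have hσ2d : σ2 * d ^ 2 ≤ Pr := by nlinarith [mul_nonneg (mul_nonneg (sq_nonneg a) (sq_nonneg d)) hQ0]
        have hrelQ : a ^ 2 * d ^ 2 * Q ≤ Pr - σ2 * d ^ 2 := by nlinarith
        have K1 := af_key_poly a b σ2 Pr t d ha hb hσ2 ht hcase hσ2d
        have K1' : (1+a*b*d)^2 * (Pr - σ2*d^2) * (t^2 * (1+b^2*t^2)) ≤
            (1+a*b*t)^2 * (a ^ 2 * t ^ 2 * Ps) * (d^2 * (1+b^2*d^2)) := by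
          rw [hPst]; exact K1
        have step1 : (1+a*b*d)^2 * (t^2*(1+b^2*t^2)) * (a^2*d^2*Q)
            ≤ (1+a*b*d)^2 * (t^2*(1+b^2*t^2)) * (Pr - σ2*d^2) :=
          mul_le_mul_of_nonneg_left hrelQ (by positivity)
        have hMain : (1+a*b*d)^2 * Q * (b^2*t^2+1) ≤ (1+a*b*t)^2 * Ps * (b^2*d^2+1) := by
          rw [← mul_le_mul_iff_of_pos_right (show (0:ℝ) < a^2*d^2*t^2 by positivity)]
          nlinarith [step1, K1']
        rw [hd'eq, hcdef]
        rw [div_mul_eq_mul_div, div_mul_eq_mul_div,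
          div_le_div_iff₀ hK (by positivity)]
        nlinarith [mul_le_mul_of_nonneg_right hMain hσ2.le]
    have hpos1 : (0:ℝ) < 1 + c * Q := by nlinarith [mul_nonneg hc.le hQ0]
    rw [hFdef]
    have hlog : Real.log (1 + c * Q) ≤
        Real.log (1 + ((1 + a * b * d') ^ 2 / ((b ^ 2 * d' ^ 2 + 1) * σ2)) * Ps) :=
      (Real.log_le_log_iff hpos1 (by linarith)).mpr (by linarith)
    linarith
  -- bound the supremum from below by F d'
  have hFleM : ∀ x ∈ Icc (0:ℝ) t,
      F x ≤ (1 / 2) * Real.log (1 + ((1 + a * b * t) ^ 2 / σ2) * Ps) := by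
    intro x hx
    obtain ⟨hx0, hxt⟩ := hx
    have hfrac : (1 + a * b * x) ^ 2 / ((b ^ 2 * x ^ 2 + 1) * σ2) ≤ (1 + a * b * t) ^ 2 / σ2 := by
      apply div_le_div₀ (by positivity) _ hσ2 (by nlinarith [sq_nonneg (b*x)])
      have hab : a * b * x ≤ a * b * t :=
        mul_le_mul_of_nonneg_left hxt (mul_nonneg ha.le hb.le)
      exact pow_le_pow_left₀ (by positivity) (by linarith) 2
    have h1 : (0:ℝ) < 1 + (1 + a * b * x) ^ 2 / ((b ^ 2 * x ^ 2 + 1) * σ2) * Ps := by positivity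
    have hlog : Real.log (1 + (1 + a * b * x) ^ 2 / ((b ^ 2 * x ^ 2 + 1) * σ2) * Ps)
        ≤ Real.log (1 + (1 + a * b * t) ^ 2 / σ2 * Ps) :=
      (Real.log_le_log_iff h1 (by positivity)).mpr
        (by nlinarith [mul_le_mul_of_nonneg_right hfrac hPs.le])
    show (1 / 2) * Real.log (1 + (1 + a * b * x) ^ 2 / ((b ^ 2 * x ^ 2 + 1) * σ2) * Ps) ≤ _
    linarith
  have hbdd : BddAbove (range fun x : ℝ => ⨆ _ : x ∈ Icc (0:ℝ) t, F x) := by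
    refine ⟨max ((1 / 2) * Real.log (1 + ((1 + a * b * t) ^ 2 / σ2) * Ps)) 0, ?_⟩
    rintro y ⟨x, rfl⟩
    by_cases hx : x ∈ Icc (0:ℝ) t
    · show (⨆ _ : x ∈ Icc (0:ℝ) t, F x) ≤ _
      rw [ciSup_pos hx]
      exact le_max_of_le_left (hFleM x hx)
    · show (⨆ _ : x ∈ Icc (0:ℝ) t, F x) ≤ _
      haveI : IsEmpty (x ∈ Icc (0:ℝ) t) := ⟨fun h => hx h⟩
      rw [Real.iSup_of_isEmpty]
      exact le_max_right _ _
  have hfinal : F d' ≤ ⨆ x ∈ Icc (0:ℝ) t, F x := by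
    have h1 : (⨆ _ : d' ∈ Icc (0:ℝ) t, F d') = F d' := ciSup_pos hd'mem
    have h2 : (⨆ _ : d' ∈ Icc (0:ℝ) t, F d') ≤ ⨆ x ∈ Icc (0:ℝ) t, F x := le_ciSup hbdd d'
    rwa [h1] at h2
  -- assemble
  calc (1 / (2 * π)) * (∫ ω in Icc (-π) π, (1 / 2) * Real.log (1 + G ω * S ω))
      ≤ (1 / (2 * π)) * (∫ ω in Icc (-π) π, (1 / 2) * Real.log (1 + c * S ω)) :=
        mul_le_mul_of_nonneg_left hmono (by positivity)
    _ = (1 / 2) * ((1 / (2 * π)) * (∫ ω in Icc (-π) π, Real.log (1 + c * S ω))) := by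
        rw [integral_const_mul]; ring
    _ ≤ (1 / 2) * Real.log (1 + c * Q) := by
        have := hjen'; nlinarith [hjen']
    _ ≤ F d' := hscal
    _ ≤ ⨆ x ∈ Icc (0:ℝ) t, F x := hfinal
end

section
/- (Optimal AF relay gain) Let a > 0, b > 0 and D > 0, and define f(d) = (1 + a·b·d)²/(b²d² + 1) for d ∈ [0, D]. Then f attains its maximum over [0, D] at d* = min{a/b, D}; that is, for every d ∈ [0, D], f(d) ≤ f(min{a/b, D}). -/
open Set

/-- Optimal AF relay gain: `f(d) = (1 + abd)²/(b²d² + 1)` attains its maximum over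
`[0, D]` at `d* = min{a/b, D}`. -/
theorem optimal_af_gain (a b D : ℝ) (ha : 0 < a) (hb : 0 < b) (hD : 0 < D) :
    ∀ d ∈ Icc (0 : ℝ) D,
      (1 + a * b * d) ^ 2 / (b ^ 2 * d ^ 2 + 1)
        ≤ (1 + a * b * min (a / b) D) ^ 2 / (b ^ 2 * (min (a / b) D) ^ 2 + 1) := by
  rintro d ⟨hd0, hdD⟩
  have hden1 : (0:ℝ) < b ^ 2 * d ^ 2 + 1 := by positivity
  rcases le_or_gt (a / b) D with h | h
  · rw [min_eq_left h]
    have hab : a / b * b = a := div_mul_cancel₀ a hb.ne'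
    have hden2 : (0:ℝ) < b ^ 2 * (a / b) ^ 2 + 1 := by positivity
    have h1 : b ^ 2 * (a / b) ^ 2 = a ^ 2 := by field_simp
    have h2 : a * b * (a / b) = a ^ 2 := by field_simp
    rw [div_le_div_iff₀ hden1 hden2, h1, h2]
    nlinarith [mul_nonneg (by positivity : (0:ℝ) ≤ 1 + a ^ 2) (sq_nonneg (a - b * d))]
  · rw [min_eq_right h.le]
    have hbD : b * D < a := by
      rw [lt_div_iff₀ hb] at h; linarith
    have hden2 : (0:ℝ) < b ^ 2 * D ^ 2 + 1 := by positivity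
    rw [div_le_div_iff₀ hden1 hden2]
    have hbd : b * d ≤ b * D := by nlinarith
    have t1 : 0 ≤ (D - d) * b * ((a - b * d) * (a * b * D + 1)) := by
      apply mul_nonneg (mul_nonneg (by linarith) hb.le)
      apply mul_nonneg (by linarith) (by positivity)
    have t2 : 0 ≤ (D - d) * b * ((a - b * D) * (a * b * d + 1)) := by
      apply mul_nonneg (mul_nonneg (by linarith) hb.le)
      apply mul_nonneg (by linarith) (by positivity)
    nlinarith [t1, t2]
end

section
/- (Intersection over the power ball equals intersection over its surface) Fix a continuous function H_sr : [-π, π] → ℂ, σ² > 0, positive integers L_s and L_r, P_s > 0 and P_r > 0. With T(ω; t), H(ω; h), Q(t, h) and ξ(t) = {h ∈ ℝ^{L_r} : Q(t, h) ≤ P_r} defined as for the relay power constraint, one has ⋂_{t ∈ ℝ^{L_s}, ‖t‖² ≤ P_s} ξ(t) = ⋂_{t ∈ ℝ^{L_s}, ‖t‖² = P_s} ξ(t). -/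
open Real MeasureTheory Set intervalIntegral

/-- The intersection of the relay power ellipsoids `ξ(t)` over the closed source power
ball `‖t‖² ≤ P_s` equals the intersection over its surface `‖t‖² = P_s`. -/
theorem inter_ellipsoids_ball_eq_sphere
    (Hsr : ℝ → ℂ) (hHsr : ContinuousOn Hsr (Icc (-π) π))
    (σ2 : ℝ) (hσ2 : 0 < σ2) (Ls Lr : ℕ) (hLs : 0 < Ls) (hLr : 0 < Lr)
    (Ps Pr : ℝ) (hPs : 0 < Ps) (hPr : 0 < Pr)
    (Q : EuclideanSpace ℝ (Fin Ls) → (Fin Lr → ℝ) → ℝ)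
    (hQ : ∀ (t : EuclideanSpace ℝ (Fin Ls)) (h : Fin Lr → ℝ), Q t h =
      (1 / (2 * π)) * ∫ ω in (-π)..π,
        ‖(∑ l : Fin Lr, ((h l : ℝ) : ℂ)
            * Complex.exp (-Complex.I * ((l : ℕ) : ℂ) * (ω : ℂ)))‖ ^ 2 *
          (‖Hsr ω‖ ^ 2 *
            ‖(∑ l : Fin Ls, ((t l : ℝ) : ℂ)
              * Complex.exp (-Complex.I * ((l : ℕ) : ℂ) * (ω : ℂ)))‖ ^ 2 + σ2)) :
    (⋂ t ∈ {t : EuclideanSpace ℝ (Fin Ls) | ‖t‖ ^ 2 ≤ Ps},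
        {h : Fin Lr → ℝ | Q t h ≤ Pr})
      = ⋂ t ∈ {t : EuclideanSpace ℝ (Fin Ls) | ‖t‖ ^ 2 = Ps},
          {h : Fin Lr → ℝ | Q t h ≤ Pr} := by
  have hpi : (-π : ℝ) ≤ π := by linarith [Real.pi_pos]
  -- abbreviations
  set Tabs : EuclideanSpace ℝ (Fin Ls) → ℝ → ℝ := fun t ω =>
    ‖(∑ l : Fin Ls, ((t l : ℝ) : ℂ)
      * Complex.exp (-Complex.I * ((l : ℕ) : ℂ) * (ω : ℂ)))‖ with hTabs
  set Habs : (Fin Lr → ℝ) → ℝ → ℝ := fun h ω =>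
    ‖(∑ l : Fin Lr, ((h l : ℝ) : ℂ)
      * Complex.exp (-Complex.I * ((l : ℕ) : ℂ) * (ω : ℂ)))‖ with hHabs
  have hTcont : ∀ t, Continuous (Tabs t) := by
    intro t
    apply continuous_norm.comp
    exact continuous_finset_sum _ fun l _ => by fun_prop
  have hHcont : ∀ h, Continuous (Habs h) := by
    intro h
    apply continuous_norm.comp
    exact continuous_finset_sum _ fun l _ => by fun_prop
  have hint : ∀ (t : EuclideanSpace ℝ (Fin Ls)) (h : Fin Lr → ℝ),
      IntervalIntegrable (fun ω => Habs h ω ^ 2 *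
        (‖Hsr ω‖ ^ 2 * Tabs t ω ^ 2 + σ2)) volume (-π) π := by
    intro t h
    apply ContinuousOn.intervalIntegrable
    rw [Set.uIcc_of_le hpi]
    exact (((hHcont h).pow 2).continuousOn).mul
      ((((continuous_norm.comp_continuousOn hHsr).pow 2).mul
        (((hTcont t).pow 2).continuousOn)).add continuousOn_const)
  have key : ∀ (t₁ t₂ : EuclideanSpace ℝ (Fin Ls)) (h : Fin Lr → ℝ),
      (∀ ω, Tabs t₁ ω ^ 2 ≤ Tabs t₂ ω ^ 2) → Q t₁ h ≤ Q t₂ h := by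
    intro t₁ t₂ h hle
    rw [hQ, hQ]
    have h2π : (0:ℝ) ≤ 1 / (2 * π) := by positivity
    refine mul_le_mul_of_nonneg_left ?_ h2π
    refine intervalIntegral.integral_mono_on hpi (hint t₁ h) (hint t₂ h) ?_
    intro ω _
    have h1 : (0:ℝ) ≤ Habs h ω ^ 2 := sq_nonneg _
    have h2 : (0:ℝ) ≤ ‖Hsr ω‖ ^ 2 := sq_nonneg _
    exact mul_le_mul_of_nonneg_left
      (add_le_add_left (mul_le_mul_of_nonneg_left (hle ω) h2) σ2) h1
  apply Set.Subset.antisymm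
  · intro x hx
    simp only [Set.mem_iInter, Set.mem_setOf_eq] at hx ⊢
    intro t ht
    exact hx t ht.le
  · intro x hx
    simp only [Set.mem_iInter, Set.mem_setOf_eq] at hx ⊢
    intro t ht
    by_cases h0 : t = 0
    · -- compare with a point on the sphere
      set t' : EuclideanSpace ℝ (Fin Ls) :=
        EuclideanSpace.single (⟨0, hLs⟩ : Fin Ls) (Real.sqrt Ps) with ht'
      have hn : ‖t'‖ ^ 2 = Ps := by
        rw [ht', EuclideanSpace.norm_single, Real.norm_eq_abs,
          abs_of_nonneg (Real.sqrt_nonneg _), Real.sq_sqrt hPs.le]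
      refine le_trans (key t t' x ?_) (hx t' hn)
      intro ω
      have : Tabs t ω = 0 := by
        rw [hTabs]
        simp [h0]
      rw [this]
      simpa using sq_nonneg (Tabs t' ω)
    · set c : ℝ := Real.sqrt Ps / ‖t‖ with hc
      have hnt : (0:ℝ) < ‖t‖ := norm_pos_iff.mpr h0
      have hcpos : 0 < c := div_pos (Real.sqrt_pos.mpr hPs) hnt
      have hnorm_le : ‖t‖ ≤ Real.sqrt Ps := by
        have h1 : ‖t‖ ^ 2 ≤ Real.sqrt Ps ^ 2 := by rw [Real.sq_sqrt hPs.le]; exact ht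
        nlinarith [norm_nonneg t, Real.sqrt_nonneg Ps]
      have hc1 : 1 ≤ c := by
        rw [hc, le_div_iff₀ hnt, one_mul]
        exact hnorm_le
      set t' : EuclideanSpace ℝ (Fin Ls) := c • t with ht'
      have hn : ‖t'‖ ^ 2 = Ps := by
        rw [ht', norm_smul, Real.norm_eq_abs, abs_of_pos hcpos, hc,
          div_mul_cancel₀ _ (ne_of_gt hnt), Real.sq_sqrt hPs.le]
      refine le_trans (key t t' x ?_) (hx t' hn)
      intro ω
      have hsc : Tabs t' ω = c * Tabs t ω := by
        rw [hTabs, ht']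
        simp only [PiLp.smul_apply, smul_eq_mul, Complex.ofReal_mul, mul_assoc,
          ← Finset.mul_sum]
        rw [norm_mul, Complex.norm_real, Real.norm_eq_abs, abs_of_pos hcpos]
      rw [hsc]
      have hT0 : 0 ≤ Tabs t ω := norm_nonneg _
      exact pow_le_pow_left₀ hT0 (le_mul_of_one_le_left hT0 hc1) 2
end

section
/- (The low-pass relay's passband noise level is no worse than the AF noise level) Let a > 0, b > 0, σ² > 0, P_s > 0, P_r > 0, 0 ≤ P_pass ≤ P_s and 0 < ω_c ≤ π. Set d* = min{a/b, sqrt(P_r/(a²P_s + σ²))} and δ* = min{a/b, sqrt(P_r/(a²P_pass + (ω_c/π)·σ²))}. Then d* ≤ δ* ≤ a/b, and consequently the passband effective noise level satisfies (b²δ*² + 1)·σ²/(1 + a·b·δ*)² ≤ (b²d*² + 1)·σ²/(1 + a·b·d*)². -/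
open Real

lemma eta_antitone (a b σ2 x y : ℝ) (ha : 0 < a) (hb : 0 < b) (hσ2 : 0 < σ2)
    (hx : 0 ≤ x) (hxy : x ≤ y) (hy : b * y ≤ a) :
    (b ^ 2 * y ^ 2 + 1) * σ2 / (1 + a * b * y) ^ 2
      ≤ (b ^ 2 * x ^ 2 + 1) * σ2 / (1 + a * b * x) ^ 2 := by
  have hy0 : 0 ≤ y := le_trans hx hxy
  have hdx : (0:ℝ) < (1 + a * b * x) ^ 2 := by positivity
  have hdy : (0:ℝ) < (1 + a * b * y) ^ 2 := by positivity
  rw [div_le_div_iff₀ hdy hdx]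
  have hbx : b * x ≤ a := le_trans (by nlinarith) hy
  nlinarith [mul_nonneg (mul_nonneg (sub_nonneg.2 hxy) (sub_nonneg.2 hbx))
      (by positivity : (0:ℝ) ≤ 1 + a * b * y),
    mul_nonneg (mul_nonneg (sub_nonneg.2 hxy) (sub_nonneg.2 hy))
      (by positivity : (0:ℝ) ≤ 1 + a * b * x),
    mul_pos hb hσ2, hσ2.le]

/-- The ideal low-pass relay's passband effective noise level is no worse than the AF
noise level: with `d* = min{a/b, √(P_r/(a²P_s + σ²))}` and
`δ* = min{a/b, √(P_r/(a²P_pass + (ω_c/π)σ²))}` one has `d* ≤ δ* ≤ a/b` and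
`η(δ*) ≤ η(d*)` for `η(d) = (b²d² + 1)σ²/(1 + abd)²`. -/
theorem lowpass_passband_noise_le_af
    (a b σ2 Ps Pr Ppass ωc : ℝ) (ha : 0 < a) (hb : 0 < b) (hσ2 : 0 < σ2)
    (hPs : 0 < Ps) (hPr : 0 < Pr) (hPpass0 : 0 ≤ Ppass) (hPpass : Ppass ≤ Ps)
    (hωc0 : 0 < ωc) (hωcπ : ωc ≤ π) :
    min (a / b) (Real.sqrt (Pr / (a ^ 2 * Ps + σ2)))
        ≤ min (a / b) (Real.sqrt (Pr / (a ^ 2 * Ppass + (ωc / π) * σ2)))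
    ∧ min (a / b) (Real.sqrt (Pr / (a ^ 2 * Ppass + (ωc / π) * σ2))) ≤ a / b
    ∧ (b ^ 2 * (min (a / b) (Real.sqrt (Pr / (a ^ 2 * Ppass + (ωc / π) * σ2)))) ^ 2 + 1) * σ2
          / (1 + a * b * min (a / b) (Real.sqrt (Pr / (a ^ 2 * Ppass + (ωc / π) * σ2)))) ^ 2
      ≤ (b ^ 2 * (min (a / b) (Real.sqrt (Pr / (a ^ 2 * Ps + σ2)))) ^ 2 + 1) * σ2
          / (1 + a * b * min (a / b) (Real.sqrt (Pr / (a ^ 2 * Ps + σ2)))) ^ 2 := by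
  have hπ : (0:ℝ) < π := Real.pi_pos
  have hden2 : (0:ℝ) < a ^ 2 * Ppass + (ωc / π) * σ2 := by positivity
  have hdenle : a ^ 2 * Ppass + (ωc / π) * σ2 ≤ a ^ 2 * Ps + σ2 := by
    have h1 : (ωc / π) * σ2 ≤ σ2 := by
      have : ωc / π ≤ 1 := (div_le_one hπ).2 hωcπ
      nlinarith
    nlinarith
  have hsqrt : Real.sqrt (Pr / (a ^ 2 * Ps + σ2))
      ≤ Real.sqrt (Pr / (a ^ 2 * Ppass + (ωc / π) * σ2)) :=
    Real.sqrt_le_sqrt (div_le_div_of_nonneg_left hPr.le hden2 hdenle)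
  have h1 : min (a / b) (Real.sqrt (Pr / (a ^ 2 * Ps + σ2)))
      ≤ min (a / b) (Real.sqrt (Pr / (a ^ 2 * Ppass + (ωc / π) * σ2))) :=
    min_le_min le_rfl hsqrt
  have h2 := min_le_left (a / b) (Real.sqrt (Pr / (a ^ 2 * Ppass + (ωc / π) * σ2)))
  refine ⟨h1, h2, ?_⟩
  refine eta_antitone a b σ2 _ _ ha hb hσ2
    (le_min (by positivity) (Real.sqrt_nonneg _)) h1 ?_
  calc b * min (a / b) (Real.sqrt (Pr / (a ^ 2 * Ppass + (ωc / π) * σ2)))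
        ≤ b * (a / b) := by exact mul_le_mul_of_nonneg_left h2 hb.le
    _ = a := by field_simp
end
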